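/- Let (P_n) be the monic orthogonal polynomials defined by P_0 = 1, P_1(x) = x, and xP_n = P_{n+1} + γ_{n−1} P_{n−1}, with γ_0 = 1−√(1−r²), γ_1 = √(1−r²)(1−√(1−r²))/2, γ_n = r²/4 for n ≥ 2. Then these polynomials are orthogonal with respect to the measure with density k(x:r): ∫_{−r}^{r} P_m(x) P_n(x) k(x:r) dx = 0 whenever m ≠ n. -/

import Mathlib

open Real

open MeasureTheory Set

noncomputable def kW (r θ : ℝ) : ℝ := Real.sqrt (1 - r^2) / (Real.pi * (1 - r^2 * Real.cos θ^2))

noncomputable def kρ (r : ℝ) : ℝ := (1 - Real.sqrt (1 - r^2)) / (1 + Real.sqrt (1 - r^2))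
noncomputable def kK (r : ℝ) (k : ℤ) : ℝ := ∫ θ in Set.Ioo 0 Real.pi, Real.cos (k * θ) * kW r θ

lemma denom_pos {r : ℝ} (hr0 : 0 < r) (hr1 : r < 1) (θ : ℝ) : 0 < 1 - r^2 * Real.cos θ^2 := by
  have h1 : Real.cos θ^2 ≤ 1 := by
    nlinarith [Real.neg_one_le_cos θ, Real.cos_le_one θ]
  nlinarith [sq_nonneg r, mul_pos hr0 hr0]

lemma contW {r : ℝ} (hr0 : 0 < r) (hr1 : r < 1) : Continuous (kW r) := by
  apply Continuous.div continuous_const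
  · fun_prop
  · intro θ
    have := denom_pos hr0 hr1 θ
    positivity

lemma intW {r : ℝ} (hr0 : 0 < r) (hr1 : r < 1) (k : ℤ) :
    IntegrableOn (fun θ => Real.cos (k * θ) * kW r θ) (Set.Ioo 0 Real.pi) := by
  apply IntegrableOn.mono_set (t := Set.Icc 0 Real.pi) _ Set.Ioo_subset_Icc_self
  exact Continuous.integrableOn_Icc
    ((Real.continuous_cos.comp (continuous_const.mul continuous_id)).mul (contW hr0 hr1))

lemma K_neg (r : ℝ) (k : ℤ) : kK r (-k) = kK r k := by
  unfold kK
  congr 1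
  ext θ
  push_cast
  rw [neg_mul, Real.cos_neg]

lemma Wnonneg {r : ℝ} (hr0 : 0 < r) (hr1 : r < 1) (θ : ℝ) : 0 ≤ kW r θ := by
  unfold kW
  have := denom_pos hr0 hr1 θ
  positivity

lemma K_abs_le {r : ℝ} (hr0 : 0 < r) (hr1 : r < 1) (k : ℤ) : |kK r k| ≤ kK r 0 := by
  have h0 : kK r 0 = ∫ θ in Set.Ioo 0 Real.pi, kW r θ := by
    unfold kK; congr 1; ext θ; simp
  rw [h0]
  unfold kK
  calc |∫ θ in Set.Ioo 0 Real.pi, Real.cos (k * θ) * kW r θ|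
      ≤ ∫ θ in Set.Ioo 0 Real.pi, |Real.cos (k * θ)| * |kW r θ| := by
        simpa [abs_mul] using MeasureTheory.norm_integral_le_integral_norm (μ := volume.restrict (Set.Ioo 0 Real.pi)) (fun θ => Real.cos (k * θ) * kW r θ)
    _ ≤ ∫ θ in Set.Ioo 0 Real.pi, kW r θ := by
        apply MeasureTheory.integral_mono_of_nonneg (μ := volume.restrict (Set.Ioo 0 Real.pi))
          (f := fun θ => |Real.cos (k * θ)| * |kW r θ|) (g := fun θ => kW r θ)
        · filter_upwards with θ using mul_nonneg (abs_nonneg _) (abs_nonneg _)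
        · have := (intW hr0 hr1 0); simpa [MeasureTheory.IntegrableOn] using this
        · filter_upwards with θ
          rw [abs_of_nonneg (Wnonneg hr0 hr1 θ)]
          calc |Real.cos (k*θ)| * kW r θ ≤ 1 * kW r θ := by
                apply mul_le_mul_of_nonneg_right (Real.abs_cos_le_one _) (Wnonneg hr0 hr1 θ)
            _ = kW r θ := one_mul _

section
variable {r : ℝ}

lemma c_facts (hr0 : 0 < r) (hr1 : r < 1) :
    (Real.sqrt (1-r^2))^2 = 1 - r^2 ∧ 0 < Real.sqrt (1-r^2) ∧ Real.sqrt (1-r^2) < 1 := by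
  have h1 : (0:ℝ) < 1 - r^2 := by nlinarith
  have h2 := Real.sq_sqrt h1.le
  have h3 : 0 < Real.sqrt (1-r^2) := Real.sqrt_pos.mpr h1
  refine ⟨h2, h3, ?_⟩
  nlinarith [mul_pos hr0 hr0]

lemma rho_facts (hr0 : 0 < r) (hr1 : r < 1) : 0 < kρ r ∧ kρ r < 1 := by
  obtain ⟨h2, h3, h4⟩ := c_facts hr0 hr1
  unfold kρ
  constructor
  · apply div_pos <;> linarith
  · rw [div_lt_one (by linarith)]; linarith

lemma keyalg (hr0 : 0 < r) (hr1 : r < 1) (s : ℝ) :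
    (1 + (kρ r)^2 - 2 * kρ r * (2*s^2 - 1)) * Real.sqrt (1-r^2) = (1 - (kρ r)^2) * (1 - r^2 * s^2) := by
  obtain ⟨h2, h3, h4⟩ := c_facts hr0 hr1
  set c := Real.sqrt (1-r^2) with hc
  have hr2 : r^2 = 1 - c^2 := by linarith
  unfold kρ
  rw [← hc, hr2]
  have h1c : (1:ℝ) + c ≠ 0 := by linarith
  field_simp
  ring

lemma Wkey (hr0 : 0 < r) (hr1 : r < 1) (θ : ℝ) :
    (1 + (kρ r)^2 - 2 * kρ r * Real.cos (2*θ)) * kW r θ = (1 - (kρ r)^2) / Real.pi := by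
  have hD : 0 < 1 - r^2 * Real.cos θ^2 := by
    have h1 : Real.cos θ^2 ≤ 1 := by nlinarith [Real.neg_one_le_cos θ, Real.cos_le_one θ]
    nlinarith [sq_nonneg r, mul_pos hr0 hr0, sq_nonneg (Real.cos θ)]
  rw [Real.cos_two_mul]
  unfold kW
  rw [mul_div_assoc']
  rw [keyalg hr0 hr1]
  rw [mul_comm Real.pi _, mul_comm (1 - kρ r ^ 2) _, mul_div_mul_left _ _ (ne_of_gt hD)]

lemma cosint0 {k : ℤ} (hk : k ≠ 0) : ∫ θ in Set.Ioo 0 Real.pi, Real.cos (k * θ) = 0 := by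
  rw [← MeasureTheory.integral_Ioc_eq_integral_Ioo,
    ← intervalIntegral.integral_of_le Real.pi_pos.le]
  have hk' : (k:ℝ) ≠ 0 := Int.cast_ne_zero.mpr hk
  rw [intervalIntegral.integral_comp_mul_left Real.cos hk']
  simp [Real.sin_int_mul_pi]

lemma K_identity (hr0 : 0 < r) (hr1 : r < 1) (k : ℤ) :
    (1 + (kρ r)^2) * kK r k - kρ r * kK r (k+2) - kρ r * kK r (k-2)
      = (1 - (kρ r)^2)/Real.pi * ∫ θ in Set.Ioo 0 Real.pi, Real.cos (k*θ) := by
  unfold kK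
  rw [← integral_const_mul, ← integral_const_mul,
    ← integral_const_mul, ← integral_const_mul,
    ← MeasureTheory.integral_sub (((intW hr0 hr1 k).const_mul _))
      ((intW hr0 hr1 (k+2)).const_mul _)]
  have hA : Integrable (fun a => (1 + kρ r ^ 2) * (Real.cos (k * a) * kW r a)
      - kρ r * (Real.cos ((k+2:ℤ) * a) * kW r a)) (volume.restrict (Set.Ioo 0 Real.pi)) :=
    ((intW hr0 hr1 k).const_mul _).sub ((intW hr0 hr1 (k+2)).const_mul _)
  rw [← MeasureTheory.integral_sub hA ((intW hr0 hr1 (k-2)).const_mul _)]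
  apply MeasureTheory.integral_congr_ae
  filter_upwards with θ
  have h2 : Real.cos (((k+2:ℤ)) * θ) =
      Real.cos (k*θ) * Real.cos (2*θ) - Real.sin (k*θ) * Real.sin (2*θ) := by
    push_cast
    rw [add_mul, Real.cos_add]
  have h3 : Real.cos (((k-2:ℤ)) * θ) =
      Real.cos (k*θ) * Real.cos (2*θ) + Real.sin (k*θ) * Real.sin (2*θ) := by
    push_cast
    rw [sub_mul, Real.cos_sub]
  have h4 := Wkey hr0 hr1 θ
  linear_combination (Real.cos ((k:ℝ)*θ)) * h4 - kρ r * kW r θ * h2 - kρ r * kW r θ * h3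

lemma DstepSimple (hr0 : 0 < r) (hr1 : r < 1) (t : ℤ) (ht : 0 ≤ t) :
    kK r (t+2) - kρ r * kK r t = kρ r * (kK r (t+4) - kρ r * kK r (t+2)) := by
  have h := K_identity hr0 hr1 (t+2)
  rw [cosint0 (by omega)] at h
  have h24 : t + 2 + 2 = t + 4 := by ring
  have h22 : t + 2 - 2 = t := by ring
  rw [h24, h22] at h
  linear_combination h

lemma Dpow (hr0 : 0 < r) (hr1 : r < 1) (m : ℕ) (t : ℤ) (ht : 0 ≤ t) :
    kK r (t+2) - kρ r * kK r t = (kρ r)^m * (kK r (t+2*m+2) - kρ r * kK r (t+2*m)) := by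
  induction m generalizing t with
  | zero => simp
  | succ n ih =>
    rw [ih t ht, DstepSimple hr0 hr1 (t+2*n) (by omega)]
    have e1 : t + 2*n + 4 = t + 2*(n+1) + 2 := by ring
    have e2 : t + 2*n + 2 = t + 2*(n+1) := by ring
    rw [e1, e2]
    push_cast
    ring

lemma Dzero (hr0 : 0 < r) (hr1 : r < 1) (t : ℤ) (ht : 0 ≤ t) :
    kK r (t+2) = kρ r * kK r t := by
  obtain ⟨hρ0, hρ1⟩ := rho_facts hr0 hr1
  have hK0 : 0 ≤ kK r 0 := le_trans (abs_nonneg _) (K_abs_le hr0 hr1 0)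
  have hbound : ∀ m : ℕ, |kK r (t+2) - kρ r * kK r t| ≤ 2 * kK r 0 * (kρ r)^m := by
    intro m
    rw [Dpow hr0 hr1 m t ht, abs_mul, abs_pow, abs_of_pos hρ0]
    have h1 : |kK r (t+2*m+2) - kρ r * kK r (t+2*m)| ≤ 2 * kK r 0 := by
      have t1 : |kK r (t+2*m+2)| ≤ kK r 0 := K_abs_le hr0 hr1 _
      have t2 : |kρ r * kK r (t+2*m)| ≤ kK r 0 := by
        rw [abs_mul, abs_of_pos hρ0]
        nlinarith [K_abs_le hr0 hr1 (t+2*m), abs_nonneg (kK r (t+2*m))]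
      calc |kK r (t+2*m+2) - kρ r * kK r (t+2*m)|
          ≤ |kK r (t+2*m+2)| + |kρ r * kK r (t+2*m)| := abs_sub _ _
        _ ≤ 2 * kK r 0 := by linarith
    calc (kρ r)^m * |kK r (t+2*m+2) - kρ r * kK r (t+2*m)| ≤ (kρ r)^m * (2 * kK r 0) := by
          gcongr
      _ = 2 * kK r 0 * (kρ r)^m := by ring
  have htend : Filter.Tendsto (fun m : ℕ => 2 * kK r 0 * (kρ r)^m) Filter.atTop (nhds 0) := by
    have := tendsto_pow_atTop_nhds_zero_of_lt_one hρ0.le hρ1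
    simpa using this.const_mul (2 * kK r 0)
  have habs : |kK r (t+2) - kρ r * kK r t| ≤ 0 := ge_of_tendsto' htend hbound
  have := abs_nonneg (kK r (t+2) - kρ r * kK r t)
  have h0 : |kK r (t+2) - kρ r * kK r t| = 0 := le_antisymm habs this
  rw [abs_eq_zero] at h0
  linarith [h0]

lemma Kone (hr0 : 0 < r) (hr1 : r < 1) : kK r 1 = 0 := by
  obtain ⟨hρ0, hρ1⟩ := rho_facts hr0 hr1
  have h := K_identity hr0 hr1 1
  rw [cosint0 (by omega)] at h
  have h3 : kK r (1+2) = kρ r * kK r 1 := Dzero hr0 hr1 1 (by omega)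
  have hm : kK r (1-2) = kK r 1 := by
    have := K_neg r 1
    norm_num at this ⊢
    exact this
  rw [h3, hm] at h
  have hfac : (1 - kρ r) * kK r 1 = 0 := by linear_combination h
  rcases mul_eq_zero.mp hfac with h' | h'
  · linarith
  · exact h'

lemma Kcomb (hr0 : 0 < r) (hr1 : r < 1) (d : ℤ) (hd : 1 ≤ d) : kK r d = kρ r * kK r (d-2) := by
  rcases eq_or_lt_of_le hd with h1 | h2
  · rw [← h1]
    have : (1:ℤ) - 2 = -1 := by norm_num
    rw [this, K_neg r 1, Kone hr0 hr1]
    ring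
  · have h2' : 0 ≤ d - 2 := by omega
    have := Dzero hr0 hr1 (d-2) h2'
    have e : d - 2 + 2 = d := by ring
    rw [e] at this
    exact this

end

lemma image_eq {r : ℝ} (hr0 : 0 < r) :
    (fun θ => r * Real.cos θ) '' Set.Ioo 0 Real.pi = Set.Ioo (-r) r := by
  ext x
  constructor
  · rintro ⟨θ, hθ, rfl⟩
    obtain ⟨h1, h2⟩ := hθ
    have hc1 : Real.cos θ < 1 := by
      have := Real.strictAntiOn_cos (Set.left_mem_Icc.mpr Real.pi_pos.le)
        ⟨h1.le, h2.le⟩ h1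
      simpa using this
    have hc2 : -1 < Real.cos θ := by
      have := Real.strictAntiOn_cos ⟨h1.le, h2.le⟩
        (Set.right_mem_Icc.mpr Real.pi_pos.le) h2
      simpa using this
    refine ⟨show -r < r * Real.cos θ by nlinarith, show r * Real.cos θ < r by nlinarith⟩
  · rintro ⟨h1, h2⟩
    refine ⟨Real.arccos (x/r), ⟨?_, ?_⟩, ?_⟩
    · exact Real.arccos_pos.mpr (by rw [div_lt_one hr0]; linarith)
    · rcases lt_or_eq_of_le (Real.arccos_le_pi (x/r)) with h | h
      · exact h
      · exfalso
        have hxr : -1 ≤ x/r := by rw [le_div_iff₀ hr0]; linarith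
        have hxr2 : x/r ≤ 1 := by rw [div_le_one hr0]; linarith
        have := Real.cos_arccos hxr hxr2
        rw [h, Real.cos_pi] at this
        have : x = -r := by field_simp at this; linarith
        linarith
    · have hxr : -1 ≤ x/r := by rw [le_div_iff₀ hr0]; linarith
      have hxr2 : x/r ≤ 1 := by rw [div_le_one hr0]; linarith
      simp only []
      rw [Real.cos_arccos hxr hxr2]
      field_simp

lemma injOn_rcos {r : ℝ} (hr0 : 0 < r) : Set.InjOn (fun θ => r * Real.cos θ) (Set.Ioo 0 Real.pi) := by
  intro a ha b hb h
  have hc : Real.cos a = Real.cos b := mul_left_cancel₀ (ne_of_gt hr0) h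
  exact Real.strictAntiOn_cos.injOn (Set.Ioo_subset_Icc_self ha) (Set.Ioo_subset_Icc_self hb) hc

lemma changevar {r : ℝ} (hr0 : 0 < r) (hr1 : r < 1) (g : ℝ → ℝ) :
    (∫ x in (-r)..r, g x * (Real.sqrt (1-r^2) / (Real.pi * (1-x^2) * Real.sqrt (r^2-x^2))))
      = ∫ θ in Set.Ioo 0 Real.pi, g (r * Real.cos θ) * kW r θ := by
  rw [intervalIntegral.integral_of_le (by linarith : -r ≤ r),
    MeasureTheory.integral_Ioc_eq_integral_Ioo, ← image_eq hr0,
    integral_image_eq_integral_abs_deriv_smul measurableSet_Ioo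
      (fun θ _ => (((Real.hasDerivAt_cos θ).const_mul r).hasDerivWithinAt :
        HasDerivWithinAt (fun θ => r * Real.cos θ) (r * (-Real.sin θ)) _ θ))
      (injOn_rcos hr0)]
  apply MeasureTheory.setIntegral_congr_fun measurableSet_Ioo
  intro θ hθ
  obtain ⟨h1, h2⟩ := hθ
  have hs : 0 < Real.sin θ := Real.sin_pos_of_pos_of_lt_pi h1 h2
  have hsq : r^2 - (r * Real.cos θ)^2 = (r * Real.sin θ)^2 := by
    have := Real.sin_sq_add_cos_sq θ
    nlinarith
  have habs : |r * (-Real.sin θ)| = r * Real.sin θ := by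
    rw [abs_of_nonpos (by nlinarith)]
    ring
  show |r * - Real.sin θ| • (g (r * Real.cos θ) * (Real.sqrt (1 - r ^ 2) / (Real.pi * (1 - (r * Real.cos θ) ^ 2) * Real.sqrt (r ^ 2 - (r * Real.cos θ) ^ 2)))) = g (r * Real.cos θ) * kW r θ
  rw [smul_eq_mul, habs, hsq, Real.sqrt_sq (by positivity)]
  have hD : 0 < 1 - r^2 * Real.cos θ^2 := denom_pos hr0 hr1 θ
  have h1c : 1 - (r * Real.cos θ)^2 = 1 - r^2 * Real.cos θ^2 := by ring
  rw [h1c]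
  unfold kW
  have hπ : Real.pi ≠ 0 := Real.pi_ne_zero
  field_simp

lemma e1 {r : ℝ} (hr0 : 0 < r) (hr1 : r < 1) :
    r^2 * (1 + kρ r) = 2 * (1 - Real.sqrt (1-r^2)) := by
  obtain ⟨h2, h3, h4⟩ := c_facts hr0 hr1
  set c := Real.sqrt (1-r^2) with hc
  have hrr : r^2 = 1 - c^2 := by linarith
  unfold kρ
  rw [← hc, hrr]
  have h1c : (1:ℝ) + c ≠ 0 := by linarith
  field_simp
  ring

lemma e2 {r : ℝ} (hr0 : 0 < r) (hr1 : r < 1) :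
    r^2 * (3 + kρ r) = 4 * ((1 - Real.sqrt (1-r^2)) +
      Real.sqrt (1-r^2) * (1 - Real.sqrt (1-r^2)) / 2) := by
  obtain ⟨h2, h3, h4⟩ := c_facts hr0 hr1
  set c := Real.sqrt (1-r^2) with hc
  have hrr : r^2 = 1 - c^2 := by linarith
  unfold kρ
  rw [← hc, hrr]
  have h1c : (1:ℝ) + c ≠ 0 := by linarith
  field_simp
  ring

lemma cos_step (a θ : ℝ) :
    Real.cos ((a+2)*θ) = 2 * Real.cos θ * Real.cos ((a+1)*θ) - Real.cos (a*θ) := by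
  have h1 : (a+2)*θ = (a+1)*θ + θ := by ring
  have h2 : a*θ = (a+1)*θ - θ := by ring
  rw [h1, h2, Real.cos_add, Real.cos_sub]
  ring

lemma cosmul2 (x y θ : ℝ) :
    Real.cos (x*θ) * Real.cos (y*θ) = (Real.cos ((x+y)*θ) + Real.cos ((x-y)*θ))/2 := by
  have h1 : (x+y)*θ = x*θ + y*θ := by ring
  have h2 : (x-y)*θ = x*θ - y*θ := by ring
  rw [h1, h2, Real.cos_add, Real.cos_sub]
  ring

section
variable {r : ℝ} (hr0 : 0 < r) (hr1 : r < 1)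
  (γ : ℕ → ℝ)
  (hγ0 : γ 0 = 1 - Real.sqrt (1 - r^2))
  (hγ1 : γ 1 = Real.sqrt (1 - r^2) * (1 - Real.sqrt (1 - r^2)) / 2)
  (hγ : ∀ n, 2 ≤ n → γ n = r^2 / 4)
  (P : ℕ → ℝ → ℝ)
  (hP0 : ∀ x, P 0 x = 1)
  (hP1 : ∀ x, P 1 x = x)
  (hrec : ∀ n x, P (n + 2) x = x * P (n + 1) x - γ n * P n x)

include hr0 hr1 hγ0 hγ1 hγ hP0 hP1 hrec in
lemma Pcos : ∀ k : ℕ, ∀ θ : ℝ, P (k+2) (r * Real.cos θ)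
    = (r/2)^(k+2) * (2 * Real.cos (((k:ℝ)+2) * θ) - 2 * kρ r * Real.cos ((k:ℝ) * θ)) := by
  have key : ∀ k : ℕ, (∀ θ : ℝ, P (k+2) (r * Real.cos θ)
      = (r/2)^(k+2) * (2 * Real.cos (((k:ℝ)+2) * θ) - 2 * kρ r * Real.cos ((k:ℝ) * θ)))
      ∧ (∀ θ : ℝ, P (k+3) (r * Real.cos θ)
      = (r/2)^(k+3) * (2 * Real.cos (((k:ℝ)+3) * θ) - 2 * kρ r * Real.cos (((k:ℝ)+1) * θ))) := by
    intro k
    induction k with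
    | zero =>
      constructor
      · intro θ
        rw [show (0:ℕ)+2 = 2 from rfl, hrec 0, hP1, hP0, hγ0]
        norm_num
        rw [Real.cos_two_mul]
        have he1 := e1 hr0 hr1
        linear_combination (1/2) * he1
      · intro θ
        rw [show (0:ℕ)+3 = 3 from rfl, hrec 1, hrec 0, hP1, hP0, hγ0, hγ1]
        norm_num
        rw [Real.cos_three_mul]
        have he2 := e2 hr0 hr1
        linear_combination ((r * Real.cos θ)/4) * he2
    | succ k ih =>
      obtain ⟨ih1, ih2⟩ := ih
      refine ⟨by intro θ; rw [show k+1+2 = k+3 from rfl, ih2 θ]; push_cast; ring_nf, ?_⟩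
      intro θ
      rw [show k+1+3 = (k+2)+2 from rfl, hrec (k+2), hγ (k+2) (by omega),
        show k+2+1 = k+3 from rfl, ih2 θ, ih1 θ]
      have h1 := cos_step ((k:ℝ)+2) θ
      have h2 := cos_step ((k:ℝ)) θ
      push_cast
      ring_nf at h1 h2 ⊢
      linear_combination (-2*(r/2)^(k+4)) * h1 + (2 * kρ r * (r/2)^(k+4)) * h2
  exact fun k => (key k).1
end


lemma intK6 {r : ℝ} (hr0 : 0 < r) (hr1 : r < 1) (c1 c2 c3 c4 c5 c6 : ℝ)
    (k1 k2 k3 k4 k5 k6 : ℤ) :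
    (∫ θ in Set.Ioo 0 Real.pi,
      (c1 * (Real.cos (k1*θ) * kW r θ) + c2 * (Real.cos (k2*θ) * kW r θ)
       + c3 * (Real.cos (k3*θ) * kW r θ) + c4 * (Real.cos (k4*θ) * kW r θ)
       + c5 * (Real.cos (k5*θ) * kW r θ) + c6 * (Real.cos (k6*θ) * kW r θ)))
    = c1 * kK r k1 + c2 * kK r k2 + c3 * kK r k3 + c4 * kK r k4
      + c5 * kK r k5 + c6 * kK r k6 := by
  have I : ∀ (c:ℝ) (k:ℤ), Integrable (fun θ => c * (Real.cos (k*θ) * kW r θ))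
      (volume.restrict (Set.Ioo 0 Real.pi)) := fun c k => (intW hr0 hr1 k).const_mul c
  have I2 : Integrable (fun θ => c1 * (Real.cos (k1*θ) * kW r θ)
      + c2 * (Real.cos (k2*θ) * kW r θ)) (volume.restrict (Set.Ioo 0 Real.pi)) := by
    exact (I c1 k1).add (I c2 k2)
  have I3 : Integrable (fun θ => c1 * (Real.cos (k1*θ) * kW r θ)
      + c2 * (Real.cos (k2*θ) * kW r θ) + c3 * (Real.cos (k3*θ) * kW r θ))
      (volume.restrict (Set.Ioo 0 Real.pi)) := by exact I2.add (I c3 k3)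
  have I4 : Integrable (fun θ => c1 * (Real.cos (k1*θ) * kW r θ)
      + c2 * (Real.cos (k2*θ) * kW r θ) + c3 * (Real.cos (k3*θ) * kW r θ)
      + c4 * (Real.cos (k4*θ) * kW r θ)) (volume.restrict (Set.Ioo 0 Real.pi)) := by
    exact I3.add (I c4 k4)
  have I5 : Integrable (fun θ => c1 * (Real.cos (k1*θ) * kW r θ)
      + c2 * (Real.cos (k2*θ) * kW r θ) + c3 * (Real.cos (k3*θ) * kW r θ)
      + c4 * (Real.cos (k4*θ) * kW r θ) + c5 * (Real.cos (k5*θ) * kW r θ))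
      (volume.restrict (Set.Ioo 0 Real.pi)) := by exact I4.add (I c5 k5)
  rw [MeasureTheory.integral_add I5 (I c6 k6), MeasureTheory.integral_add I4 (I c5 k5),
    MeasureTheory.integral_add I3 (I c4 k4), MeasureTheory.integral_add I2 (I c3 k3),
    MeasureTheory.integral_add (I c1 k1) (I c2 k2)]
  simp only [MeasureTheory.integral_const_mul]
  rfl

section
variable {r : ℝ} (hr0 : 0 < r) (hr1 : r < 1)
  (γ : ℕ → ℝ)
  (hγ0 : γ 0 = 1 - Real.sqrt (1 - r^2))
  (hγ1 : γ 1 = Real.sqrt (1 - r^2) * (1 - Real.sqrt (1 - r^2)) / 2)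
  (hγ : ∀ n, 2 ≤ n → γ n = r^2 / 4)
  (P : ℕ → ℝ → ℝ)
  (hP0 : ∀ x, P 0 x = 1)
  (hP1 : ∀ x, P 1 x = x)
  (hrec : ∀ n x, P (n + 2) x = x * P (n + 1) x - γ n * P n x)

include hr0 hr1 hP0 hP1 in
lemma case01 : ∫ θ in Set.Ioo 0 Real.pi,
    P 0 (r * Real.cos θ) * P 1 (r * Real.cos θ) * kW r θ = 0 := by
  have hpt : ∀ θ:ℝ, P 0 (r*Real.cos θ) * P 1 (r*Real.cos θ) * kW r θ
      = r * (Real.cos ((1:ℤ)*θ) * kW r θ) + 0 * (Real.cos ((0:ℤ)*θ) * kW r θ)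
        + 0 * (Real.cos ((0:ℤ)*θ) * kW r θ) + 0 * (Real.cos ((0:ℤ)*θ) * kW r θ)
        + 0 * (Real.cos ((0:ℤ)*θ) * kW r θ) + 0 * (Real.cos ((0:ℤ)*θ) * kW r θ) := by
    intro θ
    rw [hP0, hP1]
    push_cast
    ring
  simp_rw [hpt]
  rw [intK6 hr0 hr1]
  rw [Kone hr0 hr1]
  ring

include hr0 hr1 hγ0 hγ1 hγ hP0 hP1 hrec in
lemma case0n (k : ℕ) : ∫ θ in Set.Ioo 0 Real.pi,
    P 0 (r * Real.cos θ) * P (k+2) (r * Real.cos θ) * kW r θ = 0 := by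
  have hpt : ∀ θ:ℝ, P 0 (r*Real.cos θ) * P (k+2) (r*Real.cos θ) * kW r θ
      = ((r/2)^(k+2)*2) * (Real.cos (((((k:ℤ)+2) : ℤ) : ℝ)*θ) * kW r θ)
        + (-(r/2)^(k+2)*2*kρ r) * (Real.cos ((((k:ℤ) : ℤ) : ℝ)*θ) * kW r θ)
        + 0 * (Real.cos ((0:ℤ)*θ) * kW r θ) + 0 * (Real.cos ((0:ℤ)*θ) * kW r θ)
        + 0 * (Real.cos ((0:ℤ)*θ) * kW r θ) + 0 * (Real.cos ((0:ℤ)*θ) * kW r θ) := by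
    intro θ
    rw [hP0, Pcos hr0 hr1 γ hγ0 hγ1 hγ P hP0 hP1 hrec k θ]
    push_cast
    ring
  simp_rw [hpt]
  rw [intK6 hr0 hr1]
  have h1 := Kcomb hr0 hr1 ((k:ℤ)+2) (by omega)
  have e1 : (k:ℤ)+2-2 = (k:ℤ) := by ring
  rw [e1] at h1
  linear_combination ((r/2)^(k+2)*2) * h1

include hr0 hr1 hγ0 hγ1 hγ hP0 hP1 hrec in
lemma case1n (k : ℕ) : ∫ θ in Set.Ioo 0 Real.pi,
    P 1 (r * Real.cos θ) * P (k+2) (r * Real.cos θ) * kW r θ = 0 := by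
  have C := (r/2)^(k+2)
  have hpt : ∀ θ:ℝ, P 1 (r*Real.cos θ) * P (k+2) (r*Real.cos θ) * kW r θ
      = ((r/2)^(k+2)*r) * (Real.cos (((((k:ℤ)+3) : ℤ) : ℝ)*θ) * kW r θ)
        + ((r/2)^(k+2)*r) * (Real.cos ((((-((k:ℤ)+1)) : ℤ) : ℝ)*θ) * kW r θ)
        + (-(r/2)^(k+2)*r*kρ r) * (Real.cos (((((k:ℤ)+1) : ℤ) : ℝ)*θ) * kW r θ)
        + (-(r/2)^(k+2)*r*kρ r) * (Real.cos ((((1-(k:ℤ)) : ℤ) : ℝ)*θ) * kW r θ)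
        + 0 * (Real.cos ((0:ℤ)*θ) * kW r θ) + 0 * (Real.cos ((0:ℤ)*θ) * kW r θ) := by
    intro θ
    rw [hP1, Pcos hr0 hr1 γ hγ0 hγ1 hγ P hP0 hP1 hrec k θ]
    have hA := cosmul2 1 ((k:ℝ)+2) θ
    have hB := cosmul2 1 ((k:ℝ)) θ
    push_cast
    ring_nf at hA hB ⊢
    linear_combination ((r/2)^(k+2)*r*2* kW r θ) * hA - ((r/2)^(k+2)*r*2*kρ r * kW r θ) * hB
  simp_rw [hpt]
  rw [intK6 hr0 hr1]
  rw [K_neg r ((k:ℤ)+1)]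
  have e4 : (1-(k:ℤ)) = -((k:ℤ)-1) := by ring
  rw [e4, K_neg r ((k:ℤ)-1)]
  have h1 := Kcomb hr0 hr1 ((k:ℤ)+3) (by omega)
  have e1 : (k:ℤ)+3-2 = (k:ℤ)+1 := by ring
  rw [e1] at h1
  have h2 := Kcomb hr0 hr1 ((k:ℤ)+1) (by omega)
  have e2 : (k:ℤ)+1-2 = (k:ℤ)-1 := by ring
  rw [e2] at h2
  linear_combination ((r/2)^(k+2)*r) * h1 + ((r/2)^(k+2)*r) * h2

include hr0 hr1 hγ0 hγ1 hγ hP0 hP1 hrec in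
lemma casemn (j k : ℕ) (hjk : j < k) : ∫ θ in Set.Ioo 0 Real.pi,
    P (j+2) (r * Real.cos θ) * P (k+2) (r * Real.cos θ) * kW r θ = 0 := by
  have hpt : ∀ θ:ℝ, P (j+2) (r*Real.cos θ) * P (k+2) (r*Real.cos θ) * kW r θ
      = ((r/2)^(j+2)*(r/2)^(k+2)*2) * (Real.cos (((((j:ℤ)+(k:ℤ)+4) : ℤ) : ℝ)*θ) * kW r θ)
        + ((r/2)^(j+2)*(r/2)^(k+2)*(2+2*(kρ r)^2)) * (Real.cos (((((j:ℤ)-(k:ℤ)) : ℤ) : ℝ)*θ) * kW r θ)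
        + (-(r/2)^(j+2)*(r/2)^(k+2)*4*kρ r) * (Real.cos (((((j:ℤ)+(k:ℤ)+2) : ℤ) : ℝ)*θ) * kW r θ)
        + (-(r/2)^(j+2)*(r/2)^(k+2)*2*kρ r) * (Real.cos (((((j:ℤ)-(k:ℤ)+2) : ℤ) : ℝ)*θ) * kW r θ)
        + (-(r/2)^(j+2)*(r/2)^(k+2)*2*kρ r) * (Real.cos (((((j:ℤ)-(k:ℤ)-2) : ℤ) : ℝ)*θ) * kW r θ)
        + ((r/2)^(j+2)*(r/2)^(k+2)*2*(kρ r)^2) * (Real.cos (((((j:ℤ)+(k:ℤ)) : ℤ) : ℝ)*θ) * kW r θ) := by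
    intro θ
    rw [Pcos hr0 hr1 γ hγ0 hγ1 hγ P hP0 hP1 hrec j θ,
      Pcos hr0 hr1 γ hγ0 hγ1 hγ P hP0 hP1 hrec k θ]
    have hA := cosmul2 ((j:ℝ)+2) ((k:ℝ)+2) θ
    have hB := cosmul2 ((j:ℝ)+2) ((k:ℝ)) θ
    have hC := cosmul2 ((j:ℝ)) ((k:ℝ)+2) θ
    have hD := cosmul2 ((j:ℝ)) ((k:ℝ)) θ
    push_cast
    ring_nf at hA hB hC hD ⊢
    linear_combination ((r/2)^(j+2)*(r/2)^(k+2)*4* kW r θ) * hA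
      - ((r/2)^(j+2)*(r/2)^(k+2)*4*kρ r * kW r θ) * hB
      - ((r/2)^(j+2)*(r/2)^(k+2)*4*kρ r * kW r θ) * hC
      + ((r/2)^(j+2)*(r/2)^(k+2)*4*(kρ r)^2 * kW r θ) * hD
  simp_rw [hpt]
  rw [intK6 hr0 hr1]
  have ej2 : ((j:ℤ)-(k:ℤ)) = -((k:ℤ)-(j:ℤ)) := by ring
  have ej4 : ((j:ℤ)-(k:ℤ)+2) = -((k:ℤ)-(j:ℤ)-2) := by ring
  have ej5 : ((j:ℤ)-(k:ℤ)-2) = -((k:ℤ)-(j:ℤ)+2) := by ring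
  rw [ej4, K_neg r ((k:ℤ)-(j:ℤ)-2), ej5, K_neg r ((k:ℤ)-(j:ℤ)+2), ej2, K_neg r ((k:ℤ)-(j:ℤ))]
  have h1 := Kcomb hr0 hr1 ((j:ℤ)+(k:ℤ)+4) (by omega)
  have e1 : (j:ℤ)+(k:ℤ)+4-2 = (j:ℤ)+(k:ℤ)+2 := by ring
  rw [e1] at h1
  have h2 := Kcomb hr0 hr1 ((j:ℤ)+(k:ℤ)+2) (by omega)
  have e2 : (j:ℤ)+(k:ℤ)+2-2 = (j:ℤ)+(k:ℤ) := by ring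
  rw [e2] at h2
  have h3 := Kcomb hr0 hr1 ((k:ℤ)-(j:ℤ)) (by omega)
  have h4 := Kcomb hr0 hr1 ((k:ℤ)-(j:ℤ)+2) (by omega)
  have e4 : (k:ℤ)-(j:ℤ)+2-2 = (k:ℤ)-(j:ℤ) := by ring
  rw [e4] at h4
  linear_combination ((r/2)^(j+2)*(r/2)^(k+2)*2) * h1
    - ((r/2)^(j+2)*(r/2)^(k+2)*2*kρ r) * h2
    + ((r/2)^(j+2)*(r/2)^(k+2)*2) * h3
    - ((r/2)^(j+2)*(r/2)^(k+2)*2*kρ r) * h4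
end

theorem konno_orthogonal_polynomials (r : ℝ) (hr0 : 0 < r) (hr1 : r < 1)
    (γ : ℕ → ℝ)
    (hγ0 : γ 0 = 1 - Real.sqrt (1 - r^2))
    (hγ1 : γ 1 = Real.sqrt (1 - r^2) * (1 - Real.sqrt (1 - r^2)) / 2)
    (hγ : ∀ n, 2 ≤ n → γ n = r^2 / 4)
    (P : ℕ → ℝ → ℝ)
    (hP0 : ∀ x, P 0 x = 1)
    (hP1 : ∀ x, P 1 x = x)
    (hrec : ∀ n x, P (n + 2) x = x * P (n + 1) x - γ n * P n x) :
    ∀ m n : ℕ, m ≠ n →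
      ∫ x in (-r)..r,
        P m x * P n x *
          (Real.sqrt (1 - r^2) / (Real.pi * (1 - x^2) * Real.sqrt (r^2 - x^2))) = 0 := by
  suffices hkey : ∀ m n : ℕ, m < n → (∫ x in (-r)..r, P m x * P n x *
      (Real.sqrt (1 - r^2) / (Real.pi * (1 - x^2) * Real.sqrt (r^2 - x^2)))) = 0 by
    intro m n hmn
    rcases lt_or_gt_of_ne hmn with h | h
    · exact hkey m n h
    · have hsym : ∀ x:ℝ, P m x * P n x = P n x * P m x := fun x => mul_comm _ _
      simp_rw [hsym]
      exact hkey n m h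
  intro m n hmn
  have hcv : (∫ x in (-r)..r, P m x * P n x *
      (Real.sqrt (1 - r^2) / (Real.pi * (1 - x^2) * Real.sqrt (r^2 - x^2))))
      = ∫ θ in Set.Ioo 0 Real.pi, P m (r * Real.cos θ) * P n (r * Real.cos θ) * kW r θ :=
    changevar hr0 hr1 (fun x => P m x * P n x)
  rw [hcv]
  rcases m with _ | _ | j <;> rcases n with _ | _ | k
  · omega
  · exact case01 hr0 hr1 P hP0 hP1
  · exact case0n hr0 hr1 γ hγ0 hγ1 hγ P hP0 hP1 hrec k
  · omega
  · omega
  · exact case1n hr0 hr1 γ hγ0 hγ1 hγ P hP0 hP1 hrec k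
  · omega
  · omega
  · exact casemn hr0 hr1 γ hγ0 hγ1 hγ P hP0 hP1 hrec j k (by omega)
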